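/- Let $w$ be a positive weight function on an interval $I$ with finite moments of all orders. Then the multiple integral $\frac{1}{n!}\int_{I^n}\prod_{1\le j<k\le n}(x_j-x_k)^2\prod_{\ell=1}^n w(x_\ell)\,dx_1\cdots dx_n$ equals the Hankel determinant $\det\left(\int_I x^{i+j}w(x)\,dx\right)_{i,j=0}^{n-1}$. -/

import Mathlib

open MeasureTheory Finset

private lemma filter_pairs_prod {n : ℕ} (f : Fin n → Fin n → ℝ) :
    ∏ p ∈ Finset.univ.filter (fun p : Fin n × Fin n => p.1 < p.2), f p.1 p.2
      = ∏ i : Fin n, ∏ j ∈ Finset.Ioi i, f i j := by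
  rw [Finset.prod_sigma']
  refine Finset.prod_bij' (fun p _ => ⟨p.1, p.2⟩) (fun p _ => (p.1, p.2)) ?_ ?_ ?_ ?_ ?_ <;>
    simp [Finset.mem_filter, Finset.mem_sigma]

private lemma vandermonde_det_eq {n : ℕ} (x : Fin n → ℝ) :
    Matrix.det (Matrix.vandermonde x)
      = ∑ σ : Equiv.Perm (Fin n),
          ((Equiv.Perm.sign σ : ℤ) : ℝ) * ∏ i, x i ^ ((σ i : Fin n) : ℕ) := by
  rw [← Matrix.det_transpose, Matrix.det_apply']
  simp [Matrix.vandermonde]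

private lemma integrand_expand {n : ℕ} (w : ℝ → ℝ) (x : Fin n → ℝ) :
    (∏ p ∈ Finset.univ.filter (fun p : Fin n × Fin n => p.1 < p.2), (x p.1 - x p.2) ^ 2) *
        ∏ ℓ : Fin n, w (x ℓ)
    = ∑ σ : Equiv.Perm (Fin n), ∑ τ : Equiv.Perm (Fin n),
        ((Equiv.Perm.sign σ : ℤ) : ℝ) * ((Equiv.Perm.sign τ : ℤ) : ℝ) *
          ∏ ℓ : Fin n, (x ℓ ^ (((σ ℓ : Fin n) : ℕ) + ((τ ℓ : Fin n) : ℕ)) * w (x ℓ)) := by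
  have h1 : (∏ p ∈ Finset.univ.filter (fun p : Fin n × Fin n => p.1 < p.2),
        (x p.1 - x p.2) ^ 2)
      = Matrix.det (Matrix.vandermonde x) * Matrix.det (Matrix.vandermonde x) := by
    rw [filter_pairs_prod (fun i j => (x i - x j) ^ 2), Matrix.det_vandermonde,
      ← Finset.prod_mul_distrib]
    refine Finset.prod_congr rfl fun i _ => ?_
    rw [← Finset.prod_mul_distrib]
    exact Finset.prod_congr rfl fun j _ => by ring
  rw [h1, vandermonde_det_eq, Finset.sum_mul_sum, Finset.sum_mul]
  refine Finset.sum_congr rfl fun σ _ => ?_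
  rw [Finset.sum_mul]
  refine Finset.sum_congr rfl fun τ _ => ?_
  simp_rw [pow_add]
  rw [Finset.prod_mul_distrib, Finset.prod_mul_distrib]
  ring

private lemma andreief_sum {n : ℕ} (m : ℕ → ℝ) :
    ∑ σ : Equiv.Perm (Fin n), ∑ τ : Equiv.Perm (Fin n),
      ((Equiv.Perm.sign σ : ℤ) : ℝ) * ((Equiv.Perm.sign τ : ℤ) : ℝ) *
        ∏ ℓ : Fin n, m (((σ ℓ : Fin n) : ℕ) + ((τ ℓ : Fin n) : ℕ))
    = (n.factorial : ℝ) *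
        Matrix.det (Matrix.of fun i j : Fin n => m ((i : ℕ) + (j : ℕ))) := by
  rw [Finset.sum_comm]
  have hdet : Matrix.det (Matrix.of fun i j : Fin n => m ((i : ℕ) + (j : ℕ)))
      = ∑ ρ : Equiv.Perm (Fin n),
          ((Equiv.Perm.sign ρ : ℤ) : ℝ) * ∏ j, m (((ρ j : Fin n) : ℕ) + (j : ℕ)) := by
    rw [Matrix.det_apply']; rfl
  have key : ∀ τ : Equiv.Perm (Fin n),
      ∑ σ : Equiv.Perm (Fin n),
        ((Equiv.Perm.sign σ : ℤ) : ℝ) * ((Equiv.Perm.sign τ : ℤ) : ℝ) *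
          ∏ ℓ : Fin n, m (((σ ℓ : Fin n) : ℕ) + ((τ ℓ : Fin n) : ℕ))
      = Matrix.det (Matrix.of fun i j : Fin n => m ((i : ℕ) + (j : ℕ))) := by
    intro τ
    rw [hdet]
    rw [← Equiv.sum_comp (Equiv.mulRight τ)
      (fun σ => ((Equiv.Perm.sign σ : ℤ) : ℝ) * ((Equiv.Perm.sign τ : ℤ) : ℝ) *
        ∏ ℓ : Fin n, m (((σ ℓ : Fin n) : ℕ) + ((τ ℓ : Fin n) : ℕ)))]
    refine Finset.sum_congr rfl fun ρ _ => ?_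
    have hsign : ((Equiv.Perm.sign (Equiv.mulRight τ ρ) : ℤ) : ℝ) *
        ((Equiv.Perm.sign τ : ℤ) : ℝ) = ((Equiv.Perm.sign ρ : ℤ) : ℝ) := by
      simp only [Equiv.coe_mulRight, Equiv.Perm.mul_apply]
      rw [← Int.cast_mul, ← Units.val_mul]
      rw [Equiv.Perm.sign_mul, mul_assoc, Int.units_mul_self, mul_one]
    rw [hsign]
    congr 1
    have := Equiv.prod_comp τ (fun j => m (((ρ j : Fin n) : ℕ) + (j : ℕ)))
    rw [← this]
    refine Finset.prod_congr rfl fun ℓ _ => ?_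
    simp [Equiv.coe_mulRight, Equiv.Perm.mul_apply]
  calc ∑ τ : Equiv.Perm (Fin n), ∑ σ : Equiv.Perm (Fin n),
        ((Equiv.Perm.sign σ : ℤ) : ℝ) * ((Equiv.Perm.sign τ : ℤ) : ℝ) *
          ∏ ℓ : Fin n, m (((σ ℓ : Fin n) : ℕ) + ((τ ℓ : Fin n) : ℕ))
      = ∑ τ : Equiv.Perm (Fin n),
          Matrix.det (Matrix.of fun i j : Fin n => m ((i : ℕ) + (j : ℕ))) :=
        Finset.sum_congr rfl fun τ _ => key τ
    _ = _ := by
        rw [Finset.sum_const, nsmul_eq_mul]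
        congr 1
        simp [Fintype.card_perm]

set_option maxHeartbeats 1000000 in
/-- Heine's formula (Andréief identity): the multiple integral of the squared
Vandermonde times the weight equals the Hankel determinant of moments. -/
theorem heine_formula (n : ℕ) (hn : 1 ≤ n) (I : Set ℝ) (hI : MeasurableSet I)
    (w : ℝ → ℝ) (hw_meas : Measurable w) (hw_pos : ∀ x ∈ I, 0 < w x)
    (hw_mom : ∀ k : ℕ, IntegrableOn (fun x => |x| ^ k * w x) I) :
    (n.factorial : ℝ)⁻¹ *
      ∫ x in Set.univ.pi (fun _ : Fin n => I),
        (∏ p ∈ Finset.univ.filter (fun p : Fin n × Fin n => p.1 < p.2),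
            (x p.1 - x p.2) ^ 2) * ∏ ℓ : Fin n, w (x ℓ) =
    Matrix.det (Matrix.of fun i j : Fin n =>
      ∫ x in I, x ^ ((i : ℕ) + (j : ℕ)) * w x) := by
  classical
  set m : ℕ → ℝ := fun k => ∫ x in I, x ^ k * w x with hm_def
  set h : ℕ → ℝ → ℝ := fun k => I.indicator (fun y => y ^ k * w y) with hh_def
  have hIntOn : ∀ k, IntegrableOn (fun y : ℝ => y ^ k * w y) I := by
    intro k
    refine (hw_mom k).mono'
      (((measurable_id.pow_const k).mul hw_meas).aestronglyMeasurable) ?_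
    filter_upwards [ae_restrict_mem hI] with y hy
    rw [Real.norm_eq_abs, abs_mul, abs_pow]
    rw [abs_of_pos (hw_pos y hy)]
  have hint : ∀ k, Integrable (h k) := fun k => (integrable_indicator_iff hI).2 (hIntOn k)
  have hS : MeasurableSet (Set.univ.pi fun _ : Fin n => I) :=
    MeasurableSet.univ_pi fun _ => hI
  have hpt : ∀ x : Fin n → ℝ,
      (Set.univ.pi fun _ : Fin n => I).indicator
        (fun x : Fin n → ℝ =>
          (∏ p ∈ Finset.univ.filter (fun p : Fin n × Fin n => p.1 < p.2),
              (x p.1 - x p.2) ^ 2) * ∏ ℓ : Fin n, w (x ℓ)) x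
      = ∑ σ : Equiv.Perm (Fin n), ∑ τ : Equiv.Perm (Fin n),
          ((Equiv.Perm.sign σ : ℤ) : ℝ) * ((Equiv.Perm.sign τ : ℤ) : ℝ) *
            ∏ ℓ : Fin n, h (((σ ℓ : Fin n) : ℕ) + ((τ ℓ : Fin n) : ℕ)) (x ℓ) := by
    intro x
    by_cases hx : x ∈ Set.univ.pi fun _ : Fin n => I
    · rw [Set.indicator_of_mem hx]
      have hxI : ∀ ℓ, x ℓ ∈ I := fun ℓ => hx ℓ (Set.mem_univ ℓ)
      have hval : ∀ k ℓ, h k (x ℓ) = x ℓ ^ k * w (x ℓ) := fun k ℓ =>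
        Set.indicator_of_mem (hxI ℓ) _
      simp_rw [hval]
      exact integrand_expand w x
    · rw [Set.indicator_of_notMem hx]
      have : ∃ ℓ : Fin n, x ℓ ∉ I := by
        by_contra hc
        push_neg at hc
        exact hx fun ℓ _ => hc ℓ
      obtain ⟨ℓ0, hℓ0⟩ := this
      symm
      refine Finset.sum_eq_zero fun σ _ => Finset.sum_eq_zero fun τ _ => ?_
      rw [Finset.prod_eq_zero (Finset.mem_univ ℓ0) (Set.indicator_of_notMem hℓ0 _),
        mul_zero]
  have hcalc : (∫ x in Set.univ.pi (fun _ : Fin n => I),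
      (∏ p ∈ Finset.univ.filter (fun p : Fin n × Fin n => p.1 < p.2),
          (x p.1 - x p.2) ^ 2) * ∏ ℓ : Fin n, w (x ℓ))
      = (n.factorial : ℝ) *
          Matrix.det (Matrix.of fun i j : Fin n => m ((i : ℕ) + (j : ℕ))) := by
    rw [← integral_indicator hS]
    rw [show ((Set.univ.pi fun _ : Fin n => I).indicator
        (fun x : Fin n → ℝ =>
          (∏ p ∈ Finset.univ.filter (fun p : Fin n × Fin n => p.1 < p.2),
              (x p.1 - x p.2) ^ 2) * ∏ ℓ : Fin n, w (x ℓ)))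
      = fun x => ∑ σ : Equiv.Perm (Fin n), ∑ τ : Equiv.Perm (Fin n),
          ((Equiv.Perm.sign σ : ℤ) : ℝ) * ((Equiv.Perm.sign τ : ℤ) : ℝ) *
            ∏ ℓ : Fin n, h (((σ ℓ : Fin n) : ℕ) + ((τ ℓ : Fin n) : ℕ)) (x ℓ)
      from funext hpt]
    rw [integral_finset_sum _ (fun σ _ => integrable_finset_sum _ fun τ _ =>
      ((Integrable.fintype_prod fun ℓ =>
        hint (((σ ℓ : Fin n) : ℕ) + ((τ ℓ : Fin n) : ℕ))).const_mul _))]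
    rw [← andreief_sum m]
    refine Finset.sum_congr rfl fun σ _ => ?_
    rw [integral_finset_sum _ (fun τ _ =>
      ((Integrable.fintype_prod fun ℓ =>
        hint (((σ ℓ : Fin n) : ℕ) + ((τ ℓ : Fin n) : ℕ))).const_mul _))]
    refine Finset.sum_congr rfl fun τ _ => ?_
    rw [MeasureTheory.integral_const_mul]
    congr 1
    rw [MeasureTheory.integral_fintype_prod_volume_eq_prod (ι := Fin n)
      (fun ℓ => h (((σ ℓ : Fin n) : ℕ) + ((τ ℓ : Fin n) : ℕ)))]
    exact Finset.prod_congr rfl fun ℓ _ => integral_indicator hI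
  rw [hcalc, ← mul_assoc, inv_mul_cancel₀ (by exact_mod_cast n.factorial_ne_zero), one_mul]
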